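/- Let p be a prime with p ≡ 3 (mod 4) and p > 3, and let x, x', y, y' ∈ ℤ/p all be nonzero. Then the pair of binary quadratic forms (x·a², y·b²) is equivalent to (x'·a², y'·b²). -/
import Mathlib


/-- A binary quadratic form over `ZMod p`, recorded by its coefficients:
`Q(a,b) = c20·a² + c11·a·b + c02·b²`. -/
structure BQF (p : ℕ) where
  c20 : ZMod p
  c11 : ZMod p
  c02 : ZMod p

/-- Evaluation of a binary quadratic form. -/
def BQF.eval {p : ℕ} (Q : BQF p) (a b : ZMod p) : ZMod p :=
  Q.c20 * a ^ 2 + Q.c11 * a * b + Q.c02 * b ^ 2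

/-- Two pairs `(Q₁, Q₂)` and `(Q₁', Q₂')` of binary quadratic forms over `ZMod p`
are equivalent if there are `R ∈ GL₂(ℤ/p)` and `S ∈ GL₂(ℤ/p)` with `det S = ±1`
such that `Qᵢ(R·(a,b)) = sᵢ₁·Q₁'(a,b) + sᵢ₂·Q₂'(a,b)` for all `(a,b)` and `i = 1,2`. -/
def PairEquiv {p : ℕ} (P P' : BQF p × BQF p) : Prop :=
  ∃ R S : Matrix (Fin 2) (Fin 2) (ZMod p),
    IsUnit R.det ∧ IsUnit S.det ∧ (S.det = 1 ∨ S.det = -1) ∧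
    (∀ a b : ZMod p,
      P.1.eval (R 0 0 * a + R 0 1 * b) (R 1 0 * a + R 1 1 * b) =
        S 0 0 * P'.1.eval a b + S 0 1 * P'.2.eval a b) ∧
    (∀ a b : ZMod p,
      P.2.eval (R 0 0 * a + R 0 1 * b) (R 1 0 * a + R 1 1 * b) =
        S 1 0 * P'.1.eval a b + S 1 1 * P'.2.eval a b)

lemma sq_or_neg_sq (p : ℕ) [Fact p.Prime] (hp4 : p % 4 = 3) (t : ZMod p) (ht : t ≠ 0) :
    ∃ w : ZMod p, w ≠ 0 ∧ (w ^ 2 = t ∨ w ^ 2 = -t) := by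
  have hneg : ¬ IsSquare (-1 : ZMod p) := by
    rw [ZMod.exists_sq_eq_neg_one_iff]; simp [hp4]
  by_cases h : IsSquare t
  · obtain ⟨w, hw⟩ := h
    refine ⟨w, fun h0 => ?_, Or.inl (by rw [sq, ← hw])⟩
    rw [h0, mul_zero] at hw
    exact ht hw
  · have h2 : IsSquare (-t) := by
      by_contra h2
      have c1 := quadraticChar_neg_one_iff_not_isSquare.mpr h
      have c2 := quadraticChar_neg_one_iff_not_isSquare.mpr h2
      have cn := quadraticChar_neg_one_iff_not_isSquare.mpr hneg
      have : quadraticChar (ZMod p) (-t) = quadraticChar (ZMod p) (-1) * quadraticChar (ZMod p) t := by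
        rw [← map_mul]; ring_nf
      rw [c2, cn, c1] at this; norm_num at this
    obtain ⟨w, hw⟩ := h2
    refine ⟨w, fun h0 => ?_, Or.inr (by rw [sq, ← hw])⟩
    rw [h0, mul_zero] at hw
    exact ht (by simpa using hw.symm)


/-- If `p ≡ 3 (mod 4)` and `x, x', y, y'` are nonzero, then `(x·a², y·b²)` is
equivalent to `(x'·a², y'·b²)`. -/
theorem all_diag_pairs_equiv (p : ℕ) [Fact p.Prime] (hp : 3 < p) (hp4 : p % 4 = 3)
    (x x' y y' : ZMod p) (hx : x ≠ 0) (hx' : x' ≠ 0) (hy : y ≠ 0) (hy' : y' ≠ 0) :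
    PairEquiv ((⟨x, 0, 0⟩ : BQF p), ⟨0, 0, y⟩) (⟨x', 0, 0⟩, ⟨0, 0, y'⟩) := by
  have ht : x' * y' * (x * y)⁻¹ ≠ 0 := by
    apply mul_ne_zero (mul_ne_zero hx' hy')
    exact inv_ne_zero (mul_ne_zero hx hy)
  obtain ⟨w, hw0, hw⟩ := sq_or_neg_sq p hp4 _ ht
  refine ⟨!![w, 0; 0, 1], !![x * w ^ 2 * x'⁻¹, 0; 0, y * y'⁻¹], ?_, ?_, ?_, ?_, ?_⟩
  · simp [Matrix.det_fin_two_of, hw0]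
  · rw [isUnit_iff_ne_zero]
    simp only [Matrix.det_fin_two_of, mul_zero, zero_mul, sub_zero]
    exact mul_ne_zero (mul_ne_zero (mul_ne_zero hx (pow_ne_zero 2 hw0)) (inv_ne_zero hx'))
      (mul_ne_zero hy (inv_ne_zero hy'))
  · simp only [Matrix.det_fin_two_of]
    rcases hw with hw | hw
    · left
      rw [hw]
      field_simp
      ring
    · right
      rw [hw]
      field_simp
      ring
  · intro a b
    simp only [BQF.eval, Matrix.cons_val', Matrix.cons_val_zero, Matrix.cons_val_one,
      Matrix.head_cons, Matrix.empty_val', Matrix.cons_val_fin_one, Matrix.head_fin_const,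
      Matrix.of_apply]
    field_simp
    ring
  · intro a b
    simp only [BQF.eval, Matrix.cons_val', Matrix.cons_val_zero, Matrix.cons_val_one,
      Matrix.head_cons, Matrix.empty_val', Matrix.cons_val_fin_one, Matrix.head_fin_const,
      Matrix.of_apply]
    field_simp
    ring
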